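/- arXiv:1506.07359 — 3 statements merged into one kernel-verified Lean document; each statement's English description precedes it below -/
import Mathlib

section
/- Policy-causal equals action-causal intervention: for every deterministic policy π, every time step t ≤ m, every history æ_{<t} with μ(æ_{<t}) > 0, and every percept e_t ∈ 𝓔, one has μ(e_t | æ_{<t}, do(π_{t:m})) = μ(e_t | æ_{<t}, do(a_t := π(æ_{<t}))); that is, ∑_{e_{t+1:m}} μ(e_{t:m} | æ_{<t}, do(a_t := π(æ_{<t}), …, a_m := π(æ_{<m}))) = ∑_{s ∈ 𝓢} μ(s | æ_{<t}) μ(e_t | s, æ_{<t} π(æ_{<t})). -/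
/-! # A framework for physicalistic sequential decision making

Following Everitt, Leike, Hutter, "Sequential Extensions of Causal and
Evidential Decision Theory".

An environment model `μ` over hidden states `S`, actions `A`, percepts `E`
with lifetime `m` is given in causally factored form
`μ(s, æ_{1:m}) = μ(s) ∏_i μ(a_i | s, æ_{<i}) μ(e_i | s, æ_{<i} a_i)`.
Histories are lists of action-percept pairs. -/

noncomputable section

variable {S A E : Type*}

/-- The product `∏ μ(a_i | s, æ_{<i}) μ(e_i | s, æ_{<i}a_i)` of the factors along the
continuation `rest` of the history-prefix `pre`. -/
def wSuf (pa : S → List (A × E) → A → ℝ) (pe : S → List (A × E) → A → E → ℝ)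
    (s : S) : List (A × E) → List (A × E) → ℝ
  | _, [] => 1
  | pre, (a, e) :: rest => pa s pre a * pe s pre a e * wSuf pa pe s (pre ++ [(a, e)]) rest

/-- A physicalistic environment model with lifetime `m`: a prior pmf on the hidden state,
together with conditional pmfs for the action and the percept at every time step
(i.e. after every history of length `< m`), which is action-positive. -/
structure Env (S A E : Type*) [Fintype S] [Fintype A] [Fintype E] (m : ℕ) where
  /-- the prior `μ(s)` over the hidden state -/
  prior : S → ℝ
  /-- the action factor `μ(a_t | s, æ_{<t})` -/
  pa : S → List (A × E) → A → ℝ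
  /-- the percept factor `μ(e_t | s, æ_{<t}a_t)` -/
  pe : S → List (A × E) → A → E → ℝ
  prior_nonneg : ∀ s, 0 ≤ prior s
  prior_sum : ∑ s, prior s = 1
  pa_nonneg : ∀ s h a, 0 ≤ pa s h a
  pa_sum : ∀ s (h : List (A × E)), h.length < m → ∑ a, pa s h a = 1
  pe_nonneg : ∀ s h a e, 0 ≤ pe s h a e
  pe_sum : ∀ s (h : List (A × E)) (a : A), h.length < m → ∑ e, pe s h a e = 1
  /-- action-positivity: `μ(æ_{<t} | s) > 0` implies `μ(a_t | s, æ_{<t}) > 0` -/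
  action_pos : ∀ s (h : List (A × E)) (a : A), h.length < m →
    0 < wSuf pa pe s [] h → 0 < pa s h a

variable [Fintype S] [Fintype A] [Fintype E] {m : ℕ}

/-- Event: the trajectory `τ = æ_{1:m}` extends the history `h = æ_{<t}`. -/
def ExtendsH (h : List (A × E)) (τ : Fin m → A × E) : Prop :=
  (List.ofFn τ).take h.length = h

/-- Event: the actions of the trajectory `τ` from (0-based) time `t0` on follow
the deterministic policy `π`. -/
def FollowsFrom (π : List (A × E) → A) (t0 : ℕ) (τ : Fin m → A × E) : Prop :=
  ∀ i : Fin m, t0 ≤ (i : ℕ) → (τ i).1 = π ((List.ofFn τ).take (i : ℕ))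

/-- Event: the action at (0-based) time `k` is `a`. -/
def ActAt (k : ℕ) (a : A) (τ : Fin m → A × E) : Prop :=
  ∀ hk : k < m, (τ ⟨k, hk⟩).1 = a

/-- Event: the percept at (0-based) time `k` is `e`. -/
def PerAt (k : ℕ) (e : E) (τ : Fin m → A × E) : Prop :=
  ∀ hk : k < m, (τ ⟨k, hk⟩).2 = e

namespace Env

/-- The joint probability `μ(s, æ_{<t})`, given directly by the causal factorization. -/
def hw (μ : Env S A E m) (s : S) (h : List (A × E)) : ℝ :=
  μ.prior s * wSuf μ.pa μ.pe s [] h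

/-- The marginal probability `μ(æ_{<t})` of a history. -/
def probH (μ : Env S A E m) (h : List (A × E)) : ℝ := ∑ s, μ.hw s h

/-- The probability `μ(æ_{<t}a_t)` of a history followed by an action. -/
def probHA (μ : Env S A E m) (h : List (A × E)) (a : A) : ℝ :=
  ∑ s, μ.hw s h * μ.pa s h a

/-- The action-evidential conditional `μ(e_t | æ_{<t}a_t)`. -/
def condE (μ : Env S A E m) (h : List (A × E)) (a : A) (e : E) : ℝ :=
  μ.probH (h ++ [(a, e)]) / μ.probHA h a

/-- The posterior `μ(s | æ_{<t})` over the hidden state. -/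
def condS (μ : Env S A E m) (s : S) (h : List (A × E)) : ℝ :=
  μ.hw s h / μ.probH h

/-- The posterior `μ(s | æ_{<t}a_t)` over the hidden state, also conditioning on `a_t`. -/
def condSA (μ : Env S A E m) (s : S) (h : List (A × E)) (a : A) : ℝ :=
  μ.hw s h * μ.pa s h a / μ.probHA h a

/-- The conditional `μ(e_t | s, æ_{<t}a_t)` given the hidden state. -/
def condESA (μ : Env S A E m) (s : S) (h : List (A × E)) (a : A) (e : E) : ℝ :=
  μ.hw s (h ++ [(a, e)]) / (μ.hw s h * μ.pa s h a)

/-! ## Causal interventions -/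

/-- The intervened joint `μ(s, æ_{<t}, e_t | do(a_t := b))`: the action factor at time `t`
is deleted and `a_t` is substituted by `b`. -/
def doJoint (μ : Env S A E m) (s : S) (h : List (A × E)) (b : A) (e : E) : ℝ :=
  μ.hw s h * μ.pe s h b e

/-- `μ(æ_{<t}, e_t | do(a_t := b))`, marginalizing the hidden state. -/
def doNum (μ : Env S A E m) (h : List (A × E)) (b : A) (e : E) : ℝ :=
  ∑ s, μ.doJoint s h b e

/-- `μ(æ_{<t} | do(a_t := b))`, marginalizing the hidden state and the percept `e_t`. -/
def doDen (μ : Env S A E m) (h : List (A × E)) (b : A) : ℝ :=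
  ∑ e, μ.doNum h b e

/-- The causal conditional `μ(e_t | æ_{<t}, do(a_t := b))`. -/
def condDo (μ : Env S A E m) (h : List (A × E)) (b : A) (e : E) : ℝ :=
  μ.doNum h b e / μ.doDen h b

/-- Product of the percept factors along the percepts `es`, all action factors being
deleted and the actions substituted according to the policy `π`:
the intervened conditional `μ(e_{t:k} | s, æ_{<t}, do(a_t := π(æ_{<t}), …))`. -/
def doPE (μ : Env S A E m) (π : List (A × E) → A) (s : S) :
    List (A × E) → List E → ℝ
  | _, [] => 1
  | h, e :: es => μ.pe s h (π h) e * μ.doPE π s (h ++ [(π h, e)]) es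

/-- `μ(æ_{<t}, e_{t:k} | do(a_t := π(æ_{<t}), …, a_m := π(æ_{<m})))` where the percepts
`e_{t:k}` are given by the list `es`. -/
def doPolNum (μ : Env S A E m) (π : List (A × E) → A) (h : List (A × E))
    (es : List E) : ℝ :=
  ∑ s, μ.hw s h * μ.doPE π s h es

/-- `μ(æ_{<t} | do(a_t := π(æ_{<t}), …, a_m := π(æ_{<m})))`, marginalizing all the
intervened percepts `e_{t:m}`. -/
def doPolDen (μ : Env S A E m) (π : List (A × E) → A) (h : List (A × E)) : ℝ :=
  ∑ es : Fin (m - h.length) → E, μ.doPolNum π h (List.ofFn es)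

/-! ## Probabilities of trajectory events -/

open Classical in
/-- The probability of an event `Q` over full trajectories `æ_{1:m}`. -/
def evP (μ : Env S A E m) (Q : (Fin m → A × E) → Prop) : ℝ :=
  ∑ τ : Fin m → A × E, if Q τ then μ.probH (List.ofFn τ) else 0

open Classical in
/-- The joint probability of the hidden state `s` and an event `Q` over full
trajectories `æ_{1:m}`. -/
def evPS (μ : Env S A E m) (s : S) (Q : (Fin m → A × E) → Prop) : ℝ :=
  ∑ τ : Fin m → A × E, if Q τ then μ.hw s (List.ofFn τ) else 0

/-- The policy-evidential conditional `μ(e_t | æ_{<t}, π_{t:m})`, conditioning on the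
event that the history extends `æ_{<t}` and the actions from time `t` to `m` follow `π`. -/
def condPev (μ : Env S A E m) (π : List (A × E) → A) (h : List (A × E)) (e : E) : ℝ :=
  μ.evP (fun τ => ExtendsH h τ ∧ FollowsFrom π h.length τ ∧ PerAt h.length e τ) /
    μ.evP (fun τ => ExtendsH h τ ∧ FollowsFrom π h.length τ)

/-- The posterior `μ(s | æ_{<t}, π_{t:m})` over the hidden state given the policy event. -/
def condSPev (μ : Env S A E m) (π : List (A × E) → A) (s : S) (h : List (A × E)) : ℝ :=
  μ.evPS s (fun τ => ExtendsH h τ ∧ FollowsFrom π h.length τ) /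
    μ.evP (fun τ => ExtendsH h τ ∧ FollowsFrom π h.length τ)

/-- The conditional `μ(e_t | s, æ_{<t}, π_{t:m})` given the hidden state and the
policy event. -/
def condESPev (μ : Env S A E m) (π : List (A × E) → A) (s : S) (h : List (A × E))
    (e : E) : ℝ :=
  μ.evPS s (fun τ => ExtendsH h τ ∧ FollowsFrom π h.length τ ∧ PerAt h.length e τ) /
    μ.evPS s (fun τ => ExtendsH h τ ∧ FollowsFrom π h.length τ)

/-- The conditional `μ(e_t | æ_{<t}a_t, π_{t+1:m})` used in the recursive definition of
the policy-evidential value. -/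
def condPevA (μ : Env S A E m) (π : List (A × E) → A) (h : List (A × E)) (a : A)
    (e : E) : ℝ :=
  μ.evP (fun τ => ExtendsH (h ++ [(a, e)]) τ ∧ FollowsFrom π (h.length + 1) τ) /
    μ.evP (fun τ => ExtendsH h τ ∧ ActAt h.length a τ ∧ FollowsFrom π (h.length + 1) τ)

/-! ## Value functions

The recursions are driven by the fuel `n`, the number of remaining time steps: the
value of a history `æ_{<t}` (for `t ≤ m + 1`) or of `æ_{<t}a_t` (for `t ≤ m`) within
lifetime `m` uses fuel `n = m - (t - 1)`, and the value is `0` for `t > m`. -/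

/-- The action-evidential value `V^{aev,π}_{μ}(æ_{<t}a_t)` (with `n = m - t + 1`):
`V^{aev,π}(æ_{<t}a_t) = ∑_{e_t} μ(e_t | æ_{<t}a_t) (u(e_t) + V^{aev,π}(æ_{<t}a_te_t))`. -/
def VaevA (μ : Env S A E m) (u : E → ℝ) (π : List (A × E) → A) :
    ℕ → List (A × E) → A → ℝ
  | 0, _, _ => 0
  | n + 1, h, a =>
    ∑ e, μ.condE h a e * (u e + μ.VaevA u π n (h ++ [(a, e)]) (π (h ++ [(a, e)])))

/-- The action-evidential value of a history, `V^{aev,π}(æ_{<t}) = V^{aev,π}(æ_{<t}π(æ_{<t}))`. -/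
def Vaev (μ : Env S A E m) (u : E → ℝ) (π : List (A × E) → A) (n : ℕ)
    (h : List (A × E)) : ℝ :=
  μ.VaevA u π n h (π h)

/-- The policy-evidential value `V^{pev,π}_{μ}(æ_{<t}a_t)` (with `n = m - t + 1`):
`V^{pev,π}(æ_{<t}a_t) = ∑_{e_t} μ(e_t | æ_{<t}a_t, π_{t+1:m}) (u(e_t) + V^{pev,π}(æ_{<t}a_te_t))`. -/
def VpevA (μ : Env S A E m) (u : E → ℝ) (π : List (A × E) → A) :
    ℕ → List (A × E) → A → ℝ
  | 0, _, _ => 0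
  | n + 1, h, a =>
    ∑ e, μ.condPevA π h a e * (u e + μ.VpevA u π n (h ++ [(a, e)]) (π (h ++ [(a, e)])))

/-- The policy-evidential value of a history. -/
def Vpev (μ : Env S A E m) (u : E → ℝ) (π : List (A × E) → A) (n : ℕ)
    (h : List (A × E)) : ℝ :=
  μ.VpevA u π n h (π h)

/-- The causal value `V^{cau,π}_{μ}(æ_{<t}a_t)` (with `n = m - t + 1`):
`V^{cau,π}(æ_{<t}a_t) = ∑_{e_t} μ(e_t | æ_{<t}, do(a_t)) (u(e_t) + V^{cau,π}(æ_{<t}a_te_t))`. -/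
def VcauA (μ : Env S A E m) (u : E → ℝ) (π : List (A × E) → A) :
    ℕ → List (A × E) → A → ℝ
  | 0, _, _ => 0
  | n + 1, h, a =>
    ∑ e, μ.condDo h a e * (u e + μ.VcauA u π n (h ++ [(a, e)]) (π (h ++ [(a, e)])))

/-- The causal value of a history. -/
def Vcau (μ : Env S A E m) (u : E → ℝ) (π : List (A × E) → A) (n : ℕ)
    (h : List (A × E)) : ℝ :=
  μ.VcauA u π n h (π h)

/-! ## Products of one-step conditionals, for the iterative forms -/

/-- `∏_{i=t}^{k} μ(e_i | æ_{<i}a_i)` with `a_i := π(æ_{<i})`, the percepts `e_{t:k}`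
being given by the list `es`. -/
def prodAev (μ : Env S A E m) (π : List (A × E) → A) : List (A × E) → List E → ℝ
  | _, [] => 1
  | h, e :: es => μ.condE h (π h) e * μ.prodAev π (h ++ [(π h, e)]) es

/-- `∏_{i=t}^{k} μ(e_i | æ_{<i}, π_{i:m})`. -/
def prodPev (μ : Env S A E m) (π : List (A × E) → A) : List (A × E) → List E → ℝ
  | _, [] => 1
  | h, e :: es => μ.condPev π h e * μ.prodPev π (h ++ [(π h, e)]) es

/-- `∏_{i=t}^{k} μ(e_i | æ_{<i}, do(a_i))` with `a_i := π(æ_{<i})`. -/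
def prodCau (μ : Env S A E m) (π : List (A × E) → A) : List (A × E) → List E → ℝ
  | _, [] => 1
  | h, e :: es => μ.condDo h (π h) e * μ.prodCau π (h ++ [(π h, e)]) es

/-- `∏_{i=t}^{k} ∑_{s} μ(s | æ_{<i}) μ(e_i | s, æ_{<i}a_i)` with `a_i := π(æ_{<i})`. -/
def prodCauX (μ : Env S A E m) (π : List (A × E) → A) : List (A × E) → List E → ℝ
  | _, [] => 1
  | h, e :: es =>
    (∑ s, μ.condS s h * μ.condESA s h (π h) e) * μ.prodCauX π (h ++ [(π h, e)]) es

end Env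

end

section Aux

variable {S A E : Type*} [Fintype S] [Fintype A] [Fintype E] {m : ℕ}

lemma wSuf_nonneg (μ : Env S A E m) (s : S) :
    ∀ (rest pre : List (A × E)), 0 ≤ wSuf μ.pa μ.pe s pre rest
  | [], _ => by simp [wSuf]
  | (a, e) :: rest, pre => by
    have := wSuf_nonneg μ s rest (pre ++ [(a, e)])
    have h1 := μ.pa_nonneg s pre a
    have h2 := μ.pe_nonneg s pre a e
    simp only [wSuf]
    positivity

lemma wSuf_snoc (μ : Env S A E m) (s : S) :
    ∀ (rest pre : List (A × E)) (a : A) (e : E),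
      wSuf μ.pa μ.pe s pre (rest ++ [(a, e)]) =
        wSuf μ.pa μ.pe s pre rest * (μ.pa s (pre ++ rest) a * μ.pe s (pre ++ rest) a e)
  | [], pre, a, e => by simp [wSuf]
  | (a', e') :: rest, pre, a, e => by
    simp only [List.cons_append, wSuf, List.append_eq]
    rw [wSuf_snoc μ s rest (pre ++ [(a', e')]) a e, List.append_assoc,
      List.singleton_append]
    ring

lemma hw_nonneg (μ : Env S A E m) (s : S) (h : List (A × E)) : 0 ≤ μ.hw s h :=
  mul_nonneg (μ.prior_nonneg s) (wSuf_nonneg μ s h [])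

lemma hw_snoc (μ : Env S A E m) (s : S) (h : List (A × E)) (a : A) (e : E) :
    μ.hw s (h ++ [(a, e)]) = μ.hw s h * μ.pa s h a * μ.pe s h a e := by
  simp [Env.hw, wSuf_snoc μ s h [] a e]; ring

lemma doPE_sum (μ : Env S A E m) (π : List (A × E) → A) (s : S) :
    ∀ (k : ℕ) (h : List (A × E)), h.length + k ≤ m →
      ∑ es : Fin k → E, μ.doPE π s h (List.ofFn es) = 1
  | 0, h, _ => by simp [Env.doPE]
  | k + 1, h, hk => by
    rw [← (Fin.consEquiv (fun _ : Fin (k + 1) => E)).sum_comp]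
    rw [Fintype.sum_prod_type]
    have hlen : h.length < m := by omega
    calc ∑ e : E, ∑ es : Fin k → E,
            μ.doPE π s h (List.ofFn ((Fin.consEquiv (fun _ : Fin (k + 1) => E)) (e, es)))
        = ∑ e : E, ∑ es : Fin k → E,
            μ.pe s h (π h) e * μ.doPE π s (h ++ [(π h, e)]) (List.ofFn es) := by
          apply Finset.sum_congr rfl; intro e _
          apply Finset.sum_congr rfl; intro es _
          simp [Fin.consEquiv, List.ofFn_succ, Env.doPE]
      _ = 1 := by
          rw [← μ.pe_sum s h (π h) hlen]
          apply Finset.sum_congr rfl; intro e _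
          rw [← Finset.mul_sum,
            doPE_sum μ π s k (h ++ [(π h, e)]) (by simp; omega), mul_one]

lemma doPolDen_eq (μ : Env S A E m) (π : List (A × E) → A) (h : List (A × E))
    (hlen : h.length ≤ m) : μ.doPolDen π h = μ.probH h := by
  rw [Env.doPolDen, Env.probH]
  simp only [Env.doPolNum]
  rw [Finset.sum_comm]
  apply Finset.sum_congr rfl; intro s _
  rw [← Finset.mul_sum, doPE_sum μ π s (m - h.length) h (by omega), mul_one, Env.hw]

lemma doPolNum_sum_eq (μ : Env S A E m) (π : List (A × E) → A) (h : List (A × E))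
    (e : E) (hlen : h.length < m) :
    ∑ es : Fin (m - h.length - 1) → E, μ.doPolNum π h (e :: List.ofFn es)
      = μ.doNum h (π h) e := by
  simp only [Env.doPolNum, Env.doNum, Env.doJoint, Env.doPE]
  rw [Finset.sum_comm]
  apply Finset.sum_congr rfl; intro s _
  calc ∑ es : Fin (m - h.length - 1) → E,
        μ.hw s h * (μ.pe s h (π h) e * μ.doPE π s (h ++ [(π h, e)]) (List.ofFn es))
      = μ.hw s h * μ.pe s h (π h) e *
          ∑ es : Fin (m - h.length - 1) → E,
            μ.doPE π s (h ++ [(π h, e)]) (List.ofFn es) := by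
        rw [Finset.mul_sum]; apply Finset.sum_congr rfl; intros; ring
    _ = μ.hw s h * μ.pe s h (π h) e := by
        rw [doPE_sum μ π s _ (h ++ [(π h, e)]) (by simp; omega), mul_one]

lemma doDen_eq (μ : Env S A E m) (b : A) (h : List (A × E)) (hlen : h.length < m) :
    μ.doDen h b = μ.probH h := by
  simp only [Env.doDen, Env.doNum, Env.doJoint, Env.probH]
  rw [Finset.sum_comm]
  apply Finset.sum_congr rfl; intro s _
  rw [← Finset.mul_sum, μ.pe_sum s h b hlen, mul_one]

end Aux

/-- **Policy-causal equals action-causal** (Proposition 1):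
for every deterministic policy `π`, history `æ_{<t}` of positive probability with `t ≤ m`,
and percept `e_t`, we have
`μ(e_t | æ_{<t}, do(π_{t:m})) = μ(e_t | æ_{<t}, do(a_t := π(æ_{<t})))`, that is,
`∑_{e_{t+1:m}} μ(e_{t:m} | æ_{<t}, do(a_t := π(æ_{<t}), …, a_m := π(æ_{<m})))
  = ∑_s μ(s | æ_{<t}) μ(e_t | s, æ_{<t}π(æ_{<t}))`. -/
theorem policy_causal_eq_action_causal
    {S A E : Type*} [Fintype S] [Fintype A] [Fintype E] {m : ℕ}
    (μ : Env S A E m) (π : List (A × E) → A) (h : List (A × E)) (e : E)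
    (hlen : h.length < m) (hpos : 0 < μ.probH h) :
    (∑ es : Fin (m - h.length - 1) → E,
        μ.doPolNum π h (e :: List.ofFn es) / μ.doPolDen π h)
        = μ.condDo h (π h) e ∧
    (∑ es : Fin (m - h.length - 1) → E,
        μ.doPolNum π h (e :: List.ofFn es) / μ.doPolDen π h)
        = ∑ s, μ.condS s h * μ.condESA s h (π h) e := by
  have hden : μ.doPolDen π h = μ.probH h := doPolDen_eq μ π h hlen.le
  have key : (∑ es : Fin (m - h.length - 1) → E,
      μ.doPolNum π h (e :: List.ofFn es) / μ.doPolDen π h)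
      = μ.doNum h (π h) e / μ.probH h := by
    rw [← Finset.sum_div, doPolNum_sum_eq μ π h e hlen, hden]
  have hcondDo : μ.condDo h (π h) e = μ.doNum h (π h) e / μ.probH h := by
    rw [Env.condDo, doDen_eq μ (π h) h hlen]
  refine ⟨by rw [key, hcondDo], ?_⟩
  rw [key, Env.doNum, Finset.sum_div]
  apply Finset.sum_congr rfl; intro s _
  by_cases hz : μ.hw s h = 0
  · simp [Env.doJoint, Env.condS, hz]
  · have hwpos : 0 < μ.hw s h := lt_of_le_of_ne (hw_nonneg μ s h) (Ne.symm hz)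
    have hwsuf : 0 < wSuf μ.pa μ.pe s [] h := by
      refine lt_of_le_of_ne (wSuf_nonneg μ s h []) fun hh => hz ?_
      simp [Env.hw, ← hh]
    have hpa : 0 < μ.pa s h (π h) := μ.action_pos s h (π h) hlen hwsuf
    rw [Env.condS, Env.condESA, hw_snoc, Env.doJoint]
    field_simp
end

section
/- Iterative form of the policy-evidential value: for every deterministic policy π and every history æ_{<t} with t ≤ m such that the event "history extends æ_{<t} and actions from t to m follow π" has positive μ-probability, V^{pev,π}_{μ,m}(æ_{<t}) = ∑_{k=t}^m ∑_{e_{t:k}} u(e_k) ∏_{i=t}^k μ(e_i | æ_{<i}, π_{i:m}), where a_i := π(æ_{<i}) for each i. -/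
set_option linter.unusedSectionVars false

section AuxPev

variable {S A E : Type*} [Fintype S] [Fintype A] [Fintype E] {m : ℕ}

lemma extends_append_iff {h : List (A × E)} (hl : h.length < m) (a : A) (e : E)
    (τ : Fin m → A × E) :
    ExtendsH (h ++ [(a, e)]) τ ↔ ExtendsH h τ ∧ τ ⟨h.length, hl⟩ = (a, e) := by
  have hlen' : h.length < (List.ofFn τ).length := by simpa using hl
  have h1 : (List.ofFn τ).take (h.length + 1)
      = (List.ofFn τ).take h.length ++ [τ ⟨h.length, hl⟩] := by
    rw [← List.take_concat_get hlen', List.concat_eq_append]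
    simp [List.getElem_ofFn]
  simp only [ExtendsH, List.length_append, List.length_singleton, h1]
  simp [← List.concat_eq_append, List.concat_inj]

lemma followsFrom_succ_iff {t0 : ℕ} (hl : t0 < m) (π : List (A × E) → A)
    (τ : Fin m → A × E) :
    FollowsFrom π t0 τ ↔
      ((τ ⟨t0, hl⟩).1 = π ((List.ofFn τ).take t0) ∧ FollowsFrom π (t0 + 1) τ) := by
  constructor
  · intro hf
    exact ⟨hf ⟨t0, hl⟩ le_rfl, fun i hi => hf i (by omega)⟩
  · rintro ⟨h0, hf⟩ i hi
    rcases eq_or_lt_of_le hi with heq | hlt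
    · have : i = ⟨t0, hl⟩ := Fin.ext heq.symm
      subst this
      exact h0
    · exact hf i hlt

lemma denEvent {h : List (A × E)} (hl : h.length < m) (π : List (A × E) → A)
    (τ : Fin m → A × E) :
    (ExtendsH h τ ∧ ActAt h.length (π h) τ ∧ FollowsFrom π (h.length + 1) τ) ↔
    (ExtendsH h τ ∧ FollowsFrom π h.length τ) := by
  constructor
  · rintro ⟨hx, ha, hf⟩
    refine ⟨hx, ?_⟩
    rw [followsFrom_succ_iff hl]
    refine ⟨?_, hf⟩
    rw [show (List.ofFn τ).take h.length = h from hx]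
    exact ha hl
  · rintro ⟨hx, hf⟩
    rw [followsFrom_succ_iff hl] at hf
    refine ⟨hx, fun hk => ?_, hf.2⟩
    rw [hf.1, show (List.ofFn τ).take h.length = h from hx]

lemma numEvent {h : List (A × E)} (hl : h.length < m) (π : List (A × E) → A)
    (e : E) (τ : Fin m → A × E) :
    (ExtendsH (h ++ [(π h, e)]) τ ∧ FollowsFrom π (h.length + 1) τ) ↔
    (ExtendsH h τ ∧ FollowsFrom π h.length τ ∧ PerAt h.length e τ) := by
  rw [extends_append_iff hl]
  constructor
  · rintro ⟨⟨hx, hτ⟩, hf⟩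
    refine ⟨hx, ?_, fun hk => by rw [hτ]⟩
    rw [followsFrom_succ_iff hl]
    refine ⟨?_, hf⟩
    rw [hτ, show (List.ofFn τ).take h.length = h from hx]
  · rintro ⟨hx, hf, hp⟩
    rw [followsFrom_succ_iff hl] at hf
    refine ⟨⟨hx, ?_⟩, hf.2⟩
    have h1 := hf.1
    rw [show (List.ofFn τ).take h.length = h from hx] at h1
    exact Prod.ext h1 (hp hl)

lemma evP_congr (μ : Env S A E m) {Q Q' : (Fin m → A × E) → Prop}
    (hQ : ∀ τ, Q τ ↔ Q' τ) : μ.evP Q = μ.evP Q' := by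
  classical
  unfold Env.evP
  exact Finset.sum_congr rfl fun τ _ => if_congr (hQ τ) rfl rfl

lemma condPevA_pi_eq (μ : Env S A E m) (π : List (A × E) → A)
    {h : List (A × E)} (hl : h.length < m) (e : E) :
    μ.condPevA π h (π h) e = μ.condPev π h e := by
  unfold Env.condPevA Env.condPev
  rw [evP_congr μ (numEvent hl π e), evP_congr μ (denEvent hl π)]

lemma wSuf_nonneg_s5 (pa : S → List (A × E) → A → ℝ) (pe : S → List (A × E) → A → E → ℝ)
    (hpa : ∀ s h a, 0 ≤ pa s h a) (hpe : ∀ s h a e, 0 ≤ pe s h a e) (s : S) :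
    ∀ (rest pre : List (A × E)), 0 ≤ wSuf pa pe s pre rest
  | [], _ => by rw [wSuf]; norm_num
  | (a, e) :: rest, pre => by
    rw [wSuf]
    exact mul_nonneg (mul_nonneg (hpa _ _ _) (hpe _ _ _ _))
      (wSuf_nonneg_s5 pa pe hpa hpe s rest _)

lemma evP_nonneg (μ : Env S A E m) (Q : (Fin m → A × E) → Prop) : 0 ≤ μ.evP Q := by
  classical
  unfold Env.evP
  refine Finset.sum_nonneg fun τ _ => ?_
  split
  · exact Finset.sum_nonneg fun s _ => mul_nonneg (μ.prior_nonneg s)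
      (wSuf_nonneg_s5 _ _ μ.pa_nonneg μ.pe_nonneg s _ _)
  · exact le_rfl

lemma numerator_eq (μ : Env S A E m) (π : List (A × E) → A)
    {h : List (A × E)} (hl : h.length < m) (e : E) :
    μ.evP (fun τ => ExtendsH h τ ∧ FollowsFrom π h.length τ ∧ PerAt h.length e τ)
      = μ.evP (fun τ => ExtendsH (h ++ [(π h, e)]) τ ∧
          FollowsFrom π (h ++ [(π h, e)]).length τ) := by
  rw [evP_congr μ (fun τ => (numEvent hl π e τ).symm)]
  simp

lemma Vpev_key (μ : Env S A E m) (u : E → ℝ) (π : List (A × E) → A) :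
    ∀ (n : ℕ) (h : List (A × E)), h.length + n = m →
      0 < μ.evP (fun τ => ExtendsH h τ ∧ FollowsFrom π h.length τ) →
      μ.Vpev u π n h =
        ∑ j ∈ Finset.range n, ∑ es : Fin (j + 1) → E,
          u (es (Fin.last j)) * μ.prodPev π h (List.ofFn es)
  | 0, h, _, _ => by simp [Env.Vpev, Env.VpevA]
  | n + 1, h, hlen, hpos => by
    have hl : h.length < m := by omega
    have lhs : μ.Vpev u π (n + 1) h =
        ∑ e, μ.condPev π h e * (u e + μ.Vpev u π n (h ++ [(π h, e)])) := by
      show μ.VpevA u π (n + 1) h (π h) = _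
      rw [Env.VpevA]
      exact Finset.sum_congr rfl fun e _ => by rw [condPevA_pi_eq μ π hl e]; rfl
    rw [lhs, Finset.sum_range_succ']
    have f0 : (∑ es : Fin (0 + 1) → E, u (es (Fin.last 0)) * μ.prodPev π h (List.ofFn es))
        = ∑ e, u e * μ.condPev π h e := by
      refine Fintype.sum_equiv (Equiv.funUnique (Fin 1) E) _ _ fun es => ?_
      simp [Env.prodPev, List.ofFn_succ, Equiv.funUnique]
    have fs : ∀ j, (∑ es : Fin (j + 1 + 1) → E,
          u (es (Fin.last (j + 1))) * μ.prodPev π h (List.ofFn es))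
        = ∑ e, μ.condPev π h e * ∑ es : Fin (j + 1) → E,
            u (es (Fin.last j)) * μ.prodPev π (h ++ [(π h, e)]) (List.ofFn es) := by
      intro j
      rw [← (Fin.consEquiv (fun _ : Fin (j + 2) => E)).sum_comp]
      rw [Fintype.sum_prod_type]
      refine Finset.sum_congr rfl fun e _ => ?_
      rw [Finset.mul_sum]
      refine Finset.sum_congr rfl fun es _ => ?_
      have hofn : List.ofFn (Fin.consEquiv (fun _ : Fin (j + 2) => E) (e, es))
          = e :: List.ofFn es := by
        simp [Fin.consEquiv, List.ofFn_succ]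
      have hlast : (Fin.consEquiv (fun _ : Fin (j + 2) => E) (e, es)) (Fin.last (j + 1))
          = es (Fin.last j) := by
        simp only [Fin.consEquiv, Equiv.coe_fn_mk]
        rw [← Fin.succ_last, Fin.cons_succ]
      rw [hofn, hlast, Env.prodPev]
      ring
    rw [f0]
    simp only [fs]
    rw [Finset.sum_comm, ← Finset.sum_add_distrib]
    refine Finset.sum_congr rfl fun e _ => ?_
    set h' := h ++ [(π h, e)] with hh'
    have hlen' : h'.length + n = m := by simp [hh']; omega
    rw [show μ.condPev π h e * (u e + μ.Vpev u π n h')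
        = μ.condPev π h e * μ.Vpev u π n h' + u e * μ.condPev π h e from by ring]
    congr 1
    rcases lt_or_eq_of_le (evP_nonneg μ
        (fun τ => ExtendsH h' τ ∧ FollowsFrom π h'.length τ)) with hP | hP
    · rw [Vpev_key μ u π n h' hlen' hP, Finset.mul_sum]
    · have hc : μ.condPev π h e = 0 := by
        unfold Env.condPev
        rw [numerator_eq μ π hl e, ← hh', ← hP, zero_div]
      rw [hc]
      simp

end AuxPev

/-- **Iterative form of the policy-evidential value**: for every deterministic policy `π`
and history `æ_{<t}` with `t ≤ m` such that the event "the history extends `æ_{<t}` and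
the actions from `t` to `m` follow `π`" has positive probability,
`V^{pev,π}_{μ,m}(æ_{<t}) = ∑_{k=t}^m ∑_{e_{t:k}} u(e_k) ∏_{i=t}^k μ(e_i | æ_{<i}, π_{i:m})`
where `a_i := π(æ_{<i})`. -/
theorem Vpev_iterative_form
    {S A E : Type*} [Fintype S] [Fintype A] [Fintype E] {m : ℕ}
    (μ : Env S A E m) (u : E → ℝ) (hu : ∀ e, 0 ≤ u e ∧ u e ≤ 1)
    (π : List (A × E) → A) (h : List (A × E))
    (hlen : h.length < m)
    (hpos : 0 < μ.evP (fun τ => ExtendsH h τ ∧ FollowsFrom π h.length τ)) :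
    μ.Vpev u π (m - h.length) h =
      ∑ j ∈ Finset.range (m - h.length), ∑ es : Fin (j + 1) → E,
        u (es (Fin.last j)) * μ.prodPev π h (List.ofFn es) := by
  have hlen2 : h.length + (m - h.length) = m := by omega
  exact Vpev_key μ u π (m - h.length) h hlen2 hpos
end

section
/- In the sequential toxoplasmosis environment, the two-step action-evidential values from the empty history are V^{aev,π₁}_{μ,2} = −30/7 for the policy π₁ (no doctor, never pet) and V^{aev,π₂}_{μ,2} = −4 for the policy π₂ (see the doctor); hence V^{aev,π₁}_{μ,2} < V^{aev,π₂}_{μ,2}, i.e. SAEDT strictly prefers seeing the doctor. -/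
/-! ## The sequential toxoplasmosis environment (lifetime m = 2)

Hidden states `T` (infected) / `H` (healthy), prior 1/2 each. At step 1 the agent
chooses `Y` (see the doctor) or `N` (don't); seeing the doctor gives percept `C`
(utility −4). Otherwise an infected agent meets a kitten `K` with probability 0.2 and
gets sick `Sick` (utility −10) with probability 0.8, while a healthy agent meets the
kitten with probability 1. After `N₁K` the agent pets (`Y`) with probability 0.8 if
infected and 0.2 if healthy; petting while infected gives `SickPet` (−9), not petting
while infected gives `Sick` (−10), petting while healthy gives `Pet` (+1), otherwise
`Z` (0). All remaining action probabilities are uniform (1/2) and all remaining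
percepts are `Z` (utility 0). -/

/-- Hidden states: infected (`T`) or healthy (`H`). -/
inductive TSt | T | H
  deriving DecidableEq

instance instFintypeTSt : Fintype TSt :=
  ⟨{TSt.T, TSt.H}, by intro x; cases x <;> simp⟩

/-- Actions: `Y` (see the doctor / pet the kitten) or `N`. -/
inductive TAct | Y | N
  deriving DecidableEq

instance instFintypeTAct : Fintype TAct :=
  ⟨{TAct.Y, TAct.N}, by intro x; cases x <;> simp⟩

/-- Percepts: cured (`C`), kitten (`K`), sick not petting (`Sick`), sick petting
(`SickPet`), healthy petting (`Pet`), neutral (`Z`). -/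
inductive TPer | C | K | Sick | SickPet | Pet | Z
  deriving DecidableEq

instance instFintypeTPer : Fintype TPer :=
  ⟨{TPer.C, TPer.K, TPer.Sick, TPer.SickPet, TPer.Pet, TPer.Z}, by intro x; cases x <;> simp⟩

/-- The action factors `μ(a_t | s, æ_{<t})` of the sequential toxoplasmosis problem. -/
noncomputable def toxPa : TSt → List (TAct × TPer) → TAct → ℝ
  | TSt.T, [(TAct.N, TPer.K)], TAct.Y => 0.8
  | TSt.T, [(TAct.N, TPer.K)], TAct.N => 0.2
  | TSt.H, [(TAct.N, TPer.K)], TAct.Y => 0.2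
  | TSt.H, [(TAct.N, TPer.K)], TAct.N => 0.8
  | _, _, _ => 1 / 2

/-- The percept factors `μ(e_t | s, æ_{<t}a_t)` of the sequential toxoplasmosis problem. -/
noncomputable def toxPe : TSt → List (TAct × TPer) → TAct → TPer → ℝ
  | _, [], TAct.Y, TPer.C => 1
  | _, [], TAct.Y, _ => 0
  | TSt.T, [], TAct.N, TPer.K => 0.2
  | TSt.T, [], TAct.N, TPer.Sick => 0.8
  | TSt.T, [], TAct.N, _ => 0
  | TSt.H, [], TAct.N, TPer.K => 1
  | TSt.H, [], TAct.N, _ => 0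
  | TSt.T, [(TAct.N, TPer.K)], TAct.Y, TPer.SickPet => 1
  | TSt.T, [(TAct.N, TPer.K)], TAct.Y, _ => 0
  | TSt.T, [(TAct.N, TPer.K)], TAct.N, TPer.Sick => 1
  | TSt.T, [(TAct.N, TPer.K)], TAct.N, _ => 0
  | TSt.H, [(TAct.N, TPer.K)], TAct.Y, TPer.Pet => 1
  | TSt.H, [(TAct.N, TPer.K)], TAct.Y, _ => 0
  | TSt.H, [(TAct.N, TPer.K)], TAct.N, TPer.Z => 1
  | TSt.H, [(TAct.N, TPer.K)], TAct.N, _ => 0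
  | _, _, _, TPer.Z => 1
  | _, _, _, _ => 0

/-- The sequential toxoplasmosis environment model, lifetime `m = 2`. -/
noncomputable def toxEnv : Env TSt TAct TPer 2 where
  prior := fun _ => 1 / 2
  pa := toxPa
  pe := toxPe
  prior_nonneg := by intro s; norm_num
  prior_sum := by
    rw [show (Finset.univ : Finset TSt) = {TSt.T, TSt.H} by decide,
      Finset.sum_insert (by decide), Finset.sum_singleton]
    norm_num
  pa_nonneg := by intro s h a; unfold toxPa; split <;> norm_num
  pa_sum := by
    intro s h hlen
    rw [show (Finset.univ : Finset TAct) = {TAct.Y, TAct.N} by decide,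
      Finset.sum_insert (by decide), Finset.sum_singleton]
    rcases h with _ | ⟨⟨a1, e1⟩, _ | ⟨p, t⟩⟩
    · cases s <;> norm_num [toxPa]
    · cases s <;> cases a1 <;> cases e1 <;> norm_num [toxPa]
    · simp only [List.length_cons] at hlen; omega
  pe_nonneg := by intro s h a e; unfold toxPe; split <;> norm_num
  pe_sum := by
    intro s h a hlen
    rw [show (Finset.univ : Finset TPer) =
        {TPer.C, TPer.K, TPer.Sick, TPer.SickPet, TPer.Pet, TPer.Z} by decide,
      Finset.sum_insert (by decide), Finset.sum_insert (by decide),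
      Finset.sum_insert (by decide), Finset.sum_insert (by decide),
      Finset.sum_insert (by decide), Finset.sum_singleton]
    rcases h with _ | ⟨⟨a1, e1⟩, _ | ⟨p, t⟩⟩
    · cases s <;> cases a <;> norm_num [toxPe]
    · cases s <;> cases a <;> cases a1 <;> cases e1 <;> norm_num [toxPe]
    · simp only [List.length_cons] at hlen; omega
  action_pos := by
    intro s h a hlen hpos
    unfold toxPa; split <;> norm_num

/-- The utility function of the sequential toxoplasmosis problem. -/
noncomputable def toxU : TPer → ℝ
  | TPer.C => -4
  | TPer.K => 0
  | TPer.Sick => -10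
  | TPer.SickPet => -9
  | TPer.Pet => 1
  | TPer.Z => 0

/-- The policy `π₁`: don't see the doctor, never pet the kitten. -/
def toxPi1 : List (TAct × TPer) → TAct := fun _ => TAct.N

/-- The policy `π₂`: see the doctor (the step-2 action is irrelevant). -/
def toxPi2 : List (TAct × TPer) → TAct
  | [] => TAct.Y
  | _ => TAct.N


lemma sumTSt (f : TSt → ℝ) : ∑ s, f s = f TSt.T + f TSt.H := by
  rw [show (Finset.univ : Finset TSt) = {TSt.T, TSt.H} by decide,
    Finset.sum_insert (by decide), Finset.sum_singleton]

lemma sumTPer (f : TPer → ℝ) : ∑ e, f e =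
    f TPer.C + f TPer.K + f TPer.Sick + f TPer.SickPet + f TPer.Pet + f TPer.Z := by
  rw [show (Finset.univ : Finset TPer) =
      {TPer.C, TPer.K, TPer.Sick, TPer.SickPet, TPer.Pet, TPer.Z} by decide,
    Finset.sum_insert (by decide), Finset.sum_insert (by decide),
    Finset.sum_insert (by decide), Finset.sum_insert (by decide),
    Finset.sum_insert (by decide), Finset.sum_singleton]
  ring

/-- **Sequential toxoplasmosis, action-evidential values**: from the empty history,
`V^{aev,π₁}_{μ,2} = -30/7` (no doctor, never pet) and `V^{aev,π₂}_{μ,2} = -4` (see the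
doctor); hence SAEDT strictly prefers seeing the doctor. -/
theorem sequential_toxoplasmosis_action_evidential :
    toxEnv.Vaev toxU toxPi1 2 [] = -(30 / 7) ∧
    toxEnv.Vaev toxU toxPi2 2 [] = -4 ∧
    toxEnv.Vaev toxU toxPi1 2 [] < toxEnv.Vaev toxU toxPi2 2 [] := by
  have h1 : toxEnv.Vaev toxU toxPi1 2 [] = -(30 / 7) := by
    simp only [Env.Vaev, Env.VaevA, Env.condE, Env.probH, Env.probHA, Env.hw,
      sumTSt, sumTPer, toxEnv, toxPi1, toxPa, toxPe, toxU, wSuf]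
    simp only [wSuf, List.nil_append, List.cons_append, toxPa, toxPe]
    norm_num
  have h2 : toxEnv.Vaev toxU toxPi2 2 [] = -4 := by
    simp only [Env.Vaev, Env.VaevA, Env.condE, Env.probH, Env.probHA, Env.hw,
      sumTSt, sumTPer, toxEnv, toxPi2, toxPa, toxPe, toxU, wSuf]
    simp only [wSuf, List.nil_append, List.cons_append, toxPa, toxPe]
    norm_num
  refine ⟨h1, h2, ?_⟩
  rw [h1, h2]; norm_num
end
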